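/- Let Q̲ be a lower transition rate operator on ℝ^𝒳, and let 𝒬_Q̲ := {Q : Q is a rate matrix and Qf ≥ Q̲f pointwise for all f ∈ ℝ^𝒳} be its set of dominating rate matrices. Then 𝒬_Q̲ is nonempty and bounded (i.e. sup{‖Q‖ : Q ∈ 𝒬_Q̲} < +∞), and moreover for every f ∈ ℝ^𝒳 there exists some Q ∈ 𝒬_Q̲ such that Q̲f = Qf. -/

import Mathlib

open scoped BigOperators

/-- The operator norm of a matrix induced by the supremum norm on `X → ℝ`:
`‖A‖ = max_{x} Σ_{y} |A x y|`. -/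
noncomputable def matNorm {X : Type*} [Fintype X] (A : Matrix X X ℝ) : ℝ :=
  ⨆ x, ∑ y, |A x y|

/-- A (transition) rate matrix: nonnegative off-diagonal entries, rows summing to zero. -/
def IsRateMatrix {X : Type*} [Fintype X] (Q : Matrix X X ℝ) : Prop :=
  (∀ x y, x ≠ y → 0 ≤ Q x y) ∧ ∀ x, ∑ y, Q x y = 0

/-- A lower transition rate operator on `ℝ^𝒳`: maps constants to zero (LR1), is
nonnegative on off-diagonal indicators (LR2), super-additive (LR3), and
non-negatively homogeneous (LR4). -/
def IsLowerTransitionRateOperator {X : Type*} [Fintype X] [DecidableEq X]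
    (Q : (X → ℝ) → (X → ℝ)) : Prop :=
  (∀ c : ℝ, Q (fun _ => c) = 0) ∧
  (∀ x y : X, y ≠ x → 0 ≤ Q (Pi.single y 1) x) ∧
  (∀ f g : X → ℝ, ∀ x : X, Q f x + Q g x ≤ Q (f + g) x) ∧
  (∀ c : ℝ, 0 ≤ c → ∀ f : X → ℝ, Q (c • f) = c • Q f)

/-- The set of rate matrices dominating a given operator `Q̲`:
`𝒬_Q̲ = {Q rate matrix : Qf ≥ Q̲f for all f}`, where a matrix acts on `f ∈ ℝ^𝒳`
by `[Qf](x) = Σ_y Q(x,y) f(y)`. -/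
def dominatingSet {X : Type*} [Fintype X] (Ql : (X → ℝ) → (X → ℝ)) :
    Set (Matrix X X ℝ) :=
  {Q | IsRateMatrix Q ∧ ∀ f : X → ℝ, ∀ x : X, Ql f x ≤ Q.mulVec f x}

section Aux

variable {X : Type*} [Fintype X] [DecidableEq X]

set_option linter.unusedSectionVars false

/-- Hahn–Banach step: for `f ≠ 0` and each `x`, there is a linear functional `φ`
agreeing with `Q̲·(x)` at `f` and dominating it everywhere. -/
lemma exists_lin (Ql : (X → ℝ) → (X → ℝ)) (hQl : IsLowerTransitionRateOperator Ql)
    (f : X → ℝ) (hf : f ≠ 0) (x : X) :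
    ∃ φ : (X → ℝ) →ₗ[ℝ] ℝ, φ f = Ql f x ∧ ∀ g, Ql g x ≤ φ g := by
  obtain ⟨h1, h2, h3, h4⟩ := hQl
  have hQl0 : Ql 0 = 0 := by exact h1 0
  set q : (X → ℝ) → ℝ := fun g => -(Ql g x) with hq
  have q_hom : ∀ c : ℝ, 0 < c → ∀ g, q (c • g) = c * q g := by
    intro c hc g
    simp only [hq, h4 c hc.le g, Pi.smul_apply, smul_eq_mul]
    ring
  have q_add : ∀ g h, q (g + h) ≤ q g + q h := by
    intro g h
    have := h3 g h x
    simp only [hq]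
    linarith
  have key0 : Ql f x + Ql (-f) x ≤ 0 := by
    have := h3 f (-f) x
    rw [add_neg_cancel, hQl0] at this
    simpa using this
  set p : (X → ℝ) →ₗ.[ℝ] ℝ := LinearPMap.mkSpanSingleton f (q f) hf with hp
  have hbound : ∀ z : p.domain, p z ≤ q z := by
    rintro ⟨z, hz⟩
    obtain ⟨c, hc⟩ := Submodule.mem_span_singleton.1 hz
    subst hc
    have happ : p ⟨c • f, hz⟩ = c • q f :=
      LinearPMap.mkSpanSingleton'_apply f (q f) _ c hz
    rw [happ]
    rcases lt_trichotomy c 0 with hc | hc | hc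
    · have h1' : q (c • f) = (-c) * q (-f) := by
        have : c • f = (-c) • (-f) := by simp
        rw [this, q_hom (-c) (by linarith) (-f)]
      rw [h1']
      have : -(q f) ≤ q (-f) := by simp only [hq]; linarith
      have := mul_le_mul_of_nonneg_left this (by linarith : (0:ℝ) ≤ -c)
      simp only [smul_eq_mul]
      nlinarith
    · subst hc
      simp [hq, hQl0]
    · rw [q_hom c hc]; simp
  obtain ⟨g, hg1, hg2⟩ := exists_extension_of_le_sublinear p q q_hom q_add hbound
  refine ⟨-g, ?_, ?_⟩
  · have := hg1 ⟨f, Submodule.mem_span_singleton_self f⟩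
    rw [LinearPMap.mkSpanSingleton_apply] at this
    simp only [LinearMap.neg_apply, this, hq, neg_neg]
  · intro h
    have := hg2 h
    simp only [LinearMap.neg_apply, hq] at this ⊢
    linarith

lemma lin_rep (φ : (X → ℝ) →ₗ[ℝ] ℝ) (g : X → ℝ) :
    φ g = ∑ y, g y * φ (Pi.single y 1) := by
  have hrep : g = ∑ y, g y • (Pi.single y 1 : X → ℝ) := by
    funext z
    simp only [Finset.sum_apply, Pi.smul_apply, Pi.single_apply, smul_eq_mul, mul_ite,
      mul_one, mul_zero]
    rw [Finset.sum_ite_eq]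
    simp
  conv_lhs => rw [hrep]
  rw [map_sum]
  simp [smul_eq_mul]

/-- Main construction: a dominating rate matrix attaining `Q̲` at a nonzero `f`. -/
lemma key_lemma (Ql : (X → ℝ) → (X → ℝ)) (hQl : IsLowerTransitionRateOperator Ql)
    (f : X → ℝ) (hf : f ≠ 0) :
    ∃ Q ∈ dominatingSet Ql, Ql f = Q.mulVec f := by
  obtain ⟨h1, h2, h3, h4⟩ := hQl
  choose φ hφ1 hφ2 using fun x => exists_lin Ql ⟨h1, h2, h3, h4⟩ f hf x
  set Q : Matrix X X ℝ := fun x y => φ x (Pi.single y 1) with hQdef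
  have hmul : ∀ g x, Q.mulVec g x = φ x g := by
    intro g x
    rw [lin_rep (φ x) g]
    simp [Matrix.mulVec, dotProduct, hQdef, mul_comm]
  refine ⟨Q, ⟨⟨?_, ?_⟩, ?_⟩, ?_⟩
  · intro x y hxy
    exact le_trans (h2 x y (Ne.symm hxy)) (hφ2 x (Pi.single y 1))
  · intro x
    have hsum : ∑ y, Q x y = φ x (fun _ => (1:ℝ)) := by
      rw [lin_rep (φ x) (fun _ => (1:ℝ))]
      simp [hQdef]
    rw [hsum]
    have hub : Ql (fun _ => (1:ℝ)) x ≤ φ x (fun _ => (1:ℝ)) := hφ2 x _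
    have hlb : Ql (fun _ => (-1:ℝ)) x ≤ φ x (fun _ => (-1:ℝ)) := hφ2 x _
    have e1 : Ql (fun _ => (1:ℝ)) = 0 := h1 1
    have e2 : Ql (fun _ => (-1:ℝ)) = 0 := h1 (-1)
    have e3 : φ x (fun _ => (-1:ℝ)) = -φ x (fun _ => (1:ℝ)) := by
      have : (fun _ : X => (-1:ℝ)) = -(fun _ : X => (1:ℝ)) := by funext; simp
      rw [this, map_neg]
    rw [e1] at hub; rw [e2, e3] at hlb
    simp only [Pi.zero_apply] at hub hlb
    linarith
  · intro g x
    rw [hmul]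
    exact hφ2 x g
  · funext x
    rw [hmul]
    exact (hφ1 x).symm

end Aux

/-- The set of rate matrices dominating a lower transition rate operator `Q̲` is nonempty
and bounded, and the infimum defining `Q̲` is attained: for each `f` there is a dominating
rate matrix `Q` with `Q̲f = Qf`. -/
theorem stmt11 {X : Type*} [Fintype X] [Nonempty X] [DecidableEq X]
    (Ql : (X → ℝ) → (X → ℝ)) (hQl : IsLowerTransitionRateOperator Ql) :
    (dominatingSet Ql).Nonempty ∧
    BddAbove (matNorm '' dominatingSet Ql) ∧
    ∀ f : X → ℝ, ∃ Q ∈ dominatingSet Ql, Ql f = Q.mulVec f := by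
  have hone : (fun _ : X => (1:ℝ)) ≠ 0 := by
    intro h
    have := congrFun h (Classical.arbitrary X)
    norm_num at this
  obtain ⟨Q0, hQ0, -⟩ := key_lemma Ql hQl _ hone
  refine ⟨⟨Q0, hQ0⟩, ?_, ?_⟩
  · refine ⟨2 * ∑ x, |Ql (Pi.single x 1) x|, ?_⟩
    rintro - ⟨Q, hQ, rfl⟩
    obtain ⟨⟨hoff, hrow⟩, hdom⟩ := hQ
    apply ciSup_le
    intro x
    have hcalc : Q.mulVec (Pi.single x 1) x = Q x x := by
      simp [Matrix.mulVec, dotProduct, Pi.single_apply, mul_ite]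
    have hdiagle : Ql (Pi.single x 1) x ≤ Q x x := by
      have := hdom (Pi.single x 1) x
      rwa [hcalc] at this
    have herase : ∑ y ∈ Finset.univ.erase x, Q x y = -Q x x := by
      have := Finset.add_sum_erase Finset.univ (fun y => Q x y) (Finset.mem_univ x)
      rw [hrow x] at this
      linarith
    have heranneg : 0 ≤ ∑ y ∈ Finset.univ.erase x, Q x y :=
      Finset.sum_nonneg fun y hy => hoff x y (Ne.symm (Finset.ne_of_mem_erase hy))
    have hdneg : Q x x ≤ 0 := by linarith
    have habs : ∑ y, |Q x y| = -2 * Q x x := by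
      have := Finset.add_sum_erase Finset.univ (fun y => |Q x y|) (Finset.mem_univ x)
      rw [← this]
      have : ∑ y ∈ Finset.univ.erase x, |Q x y| = ∑ y ∈ Finset.univ.erase x, Q x y :=
        Finset.sum_congr rfl fun y hy =>
          abs_of_nonneg (hoff x y (Ne.symm (Finset.ne_of_mem_erase hy)))
      rw [this, herase]
      show |Q x x| + -Q x x = -2 * Q x x
      rw [abs_of_nonpos hdneg]
      ring
    rw [habs]
    have hterm : -Ql (Pi.single x 1) x ≤ ∑ x', |Ql (Pi.single x' 1) x'| := by
      calc -Ql (Pi.single x 1) x ≤ |Ql (Pi.single x 1) x| := neg_le_abs _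
        _ ≤ ∑ x', |Ql (Pi.single x' 1) x'| :=
          Finset.single_le_sum (f := fun x' => |Ql (Pi.single x' 1) x'|) (fun i _ => abs_nonneg _) (Finset.mem_univ x)
    linarith
  · intro f
    by_cases hf : f = 0
    · subst hf
      refine ⟨Q0, hQ0, ?_⟩
      have : Ql 0 = 0 := by exact hQl.1 0
      rw [this]
      funext x
      simp [Matrix.mulVec]
    · exact key_lemma Ql hQl f hf
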